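/- arXiv:2507.14511 — 2 statements merged into one kernel-verified Lean document; each statement's English description precedes it below -/
import Mathlib

section
/- Let Ψ : ℝ^{N-1} → ℝ be L-Lipschitz, U a bounded real-valued harmonic function on E_Ψ, and α ∈ (0,1). If U satisfies |U(x', x_N) − U(x', y_N)| ≤ C|x_N − y_N|^α along vertical lines, then U extends continuously to the closed epigraph {(x', x_N) : x_N ≥ Ψ(x')}. -/
open Metric Set MeasureTheory Filter
open Topology

noncomputable section

/-- `Euc n` is Euclidean space `ℝ^n`. -/
abbrev Euc (n : ℕ) := EuclideanSpace ℝ (Fin n)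

/-- A function is harmonic on a set if it is `C²` there and its Laplacian vanishes. -/
def HarmonicOnSet {m : ℕ} (f : Euc m → ℝ) (s : Set (Euc m)) : Prop :=
  ContDiffOn ℝ 2 f s ∧ ∀ x ∈ s,
    ∑ i : Fin m, fderiv ℝ (fun y => fderiv ℝ f y (EuclideanSpace.single i 1)) x
      (EuclideanSpace.single i 1) = 0

/-- The constant `K_N = 2 m_{N-1}(B^{N-1}) / m_N(B^N)` (here `N = n+1`). -/
def Kconst (n : ℕ) : ℝ :=
  2 * (volume (ball (0 : Euc n) 1)).toReal / (volume (ball (0 : Euc (n+1)) 1)).toReal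

/-- the projection of `ℝ^{n+1}` onto the first `n` coordinates -/
def proj {n : ℕ} (x : Euc (n+1)) : Euc n := WithLp.toLp 2 (fun i : Fin n => x i.castSucc)

/-- the last standard basis vector `e_N` in `ℝ^{n+1}` -/
def eN (n : ℕ) : Euc (n+1) := EuclideanSpace.single (Fin.last n) 1

/-- the strict epigraph of `Ψ : ℝ^n → ℝ` -/
def epigraph {n : ℕ} (Ψ : Euc n → ℝ) : Set (Euc (n+1)) :=
  {x | Ψ (proj x) < x (Fin.last n)}

/-- the point obtained from `x` by replacing its last coordinate with `t` -/
def vmove {n : ℕ} (x : Euc (n+1)) (t : ℝ) : Euc (n+1) :=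
  x + (t - x (Fin.last n)) • eN n

/-- the vertical Hölder condition of order `α` with constant `C` -/
def VertHolder {n : ℕ} (Ψ : Euc n → ℝ) (U : Euc (n+1) → ℝ) (C α : ℝ) : Prop :=
  ∀ x ∈ epigraph Ψ, ∀ t : ℝ, Ψ (proj x) < t →
    |U x - U (vmove x t)| ≤ C * |x (Fin.last n) - t| ^ α


-- auxiliary lemmas

lemma proj_add_smul_eN {n : ℕ} (x : Euc (n+1)) (c : ℝ) : proj (x + c • eN n) = proj x := by
  ext i
  simp [proj, eN, PiLp.add_apply, PiLp.smul_apply, EuclideanSpace.single_apply,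
    (Fin.castSucc_lt_last i).ne]

lemma last_add_smul_eN {n : ℕ} (x : Euc (n+1)) (c : ℝ) :
    (x + c • eN n) (Fin.last n) = x (Fin.last n) + c := by
  simp [eN, PiLp.add_apply, PiLp.smul_apply, EuclideanSpace.single_apply]

lemma vmove_eq_add_smul {n : ℕ} (x : Euc (n+1)) (c : ℝ) :
    vmove x (x (Fin.last n) + c) = x + c • eN n := by
  simp [vmove]

lemma key_est {n : ℕ} {Ψ : Euc n → ℝ} {U : Euc (n+1) → ℝ} {C α : ℝ}
    (hvert : VertHolder Ψ U C α) {x : Euc (n+1)} (hx : Ψ (proj x) ≤ x (Fin.last n))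
    {h k : ℝ} (hh : 0 < h) (hk : 0 < k) :
    |U (x + h • eN n) - U (x + k • eN n)| ≤ C * |h - k| ^ α := by
  set y := x + h • eN n with hy
  have hyproj : proj y = proj x := proj_add_smul_eN x h
  have hylast : y (Fin.last n) = x (Fin.last n) + h := last_add_smul_eN x h
  have hymem : y ∈ epigraph Ψ := by
    simp only [epigraph, mem_setOf_eq, hyproj, hylast]
    linarith
  have ht : Ψ (proj y) < x (Fin.last n) + k := by rw [hyproj]; linarith
  have hmove : vmove y (x (Fin.last n) + k) = x + k • eN n := by
    simp only [vmove, hy, last_add_smul_eN]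
    rw [add_assoc, ← add_smul]
    congr 2
    ring
  have := hvert y hymem (x (Fin.last n) + k) ht
  rw [hmove, hylast] at this
  convert this using 3
  ring


/-- The vertical Hölder condition implies that `U` extends continuously to the closed
epigraph `{x : Ψ(x') ≤ x_N}`. -/
theorem stmt8 {n : ℕ} (L C α : ℝ) (hL : 0 ≤ L) (hα : α ∈ Ioo (0:ℝ) 1)
    (Ψ : Euc n → ℝ) (hΨ : ∀ x y, |Ψ x - Ψ y| ≤ L * ‖x - y‖)
    (U : Euc (n+1) → ℝ) (hharm : HarmonicOnSet U (epigraph Ψ))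
    (hbdd : BddAbove ((fun y => |U y|) '' epigraph Ψ))
    (hvert : VertHolder Ψ U C α) :
    ∃ V : Euc (n+1) → ℝ,
      ContinuousOn V {x : Euc (n+1) | Ψ (proj x) ≤ x (Fin.last n)} ∧
      ∀ x ∈ epigraph Ψ, V x = U x := by
  have hcont : ContinuousOn U (epigraph Ψ) := hharm.1.continuousOn
  set S : Set (Euc (n+1)) := {x : Euc (n+1) | Ψ (proj x) ≤ x (Fin.last n)} with hS
  have hsub : epigraph Ψ ⊆ S := fun x hx => show Ψ (proj x) ≤ x (Fin.last n) from le_of_lt hx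
  -- C ≥ 0
  have hC : 0 ≤ C := by
    set x0 : Euc (n+1) := EuclideanSpace.single (Fin.last n) (Ψ 0 + 1) with hx0
    have hproj0 : proj x0 = 0 := by
      ext i
      simp [hx0, proj, EuclideanSpace.single_apply, (Fin.castSucc_lt_last i).ne]
    have hlast0 : x0 (Fin.last n) = Ψ 0 + 1 := by
      simp [hx0, EuclideanSpace.single_apply]
    have hmem : x0 ∈ epigraph Ψ := by
      simp only [epigraph, mem_setOf_eq, hproj0, hlast0]; linarith
    have := hvert x0 hmem (x0 (Fin.last n) + 1) (by rw [hproj0, hlast0]; linarith)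
    have h1 : |x0 (Fin.last n) - (x0 (Fin.last n) + 1)| ^ α = 1 := by
      norm_num
    rw [h1, mul_one] at this
    exact le_trans (abs_nonneg _) this
  -- the approximating sequence
  set F : ℕ → Euc (n+1) → ℝ := fun m x => U (x + (1 / (m + 1) : ℝ) • eN n) with hF
  have hpos : ∀ m : ℕ, (0:ℝ) < 1/(m+1) := fun m => by positivity
  -- each F m is continuous on S
  have hFcont : ∀ m : ℕ, ContinuousOn (F m) S := by
    intro m
    apply hcont.comp
      (Continuous.continuousOn (by fun_prop :
        Continuous fun x : Euc (n+1) => x + (1/((m:ℝ)+1)) • eN n))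
    intro x hx
    simp only [epigraph, mem_setOf_eq, proj_add_smul_eN, last_add_smul_eN]
    have := hpos m
    exact lt_of_le_of_lt hx (by linarith)
  -- bound tends to zero
  have hbound : Tendsto (fun N : ℕ => C * (1/(N+1) : ℝ) ^ α) atTop (𝓝 0) := by
    have h1 : Tendsto (fun N : ℕ => (1/(N+1) : ℝ)) atTop (𝓝 0) :=
      tendsto_one_div_add_atTop_nhds_zero_nat
    have h2 : ContinuousAt (fun x : ℝ => x ^ α) 0 :=
      Real.continuousAt_rpow_const 0 α (Or.inr hα.1.le)
    have h3 := (h2.tendsto.comp h1).const_mul C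
    simpa [Real.zero_rpow hα.1.ne'] using h3
  -- uniform Cauchy
  have hUC : UniformCauchySeqOn F atTop S := by
    rw [Metric.uniformCauchySeqOn_iff]
    intro ε hε
    obtain ⟨N, hN⟩ := (hbound.eventually (gt_mem_nhds hε)).exists_forall_of_atTop
    refine ⟨N, fun m hm n' hn' x hx => ?_⟩
    have hkey := key_est hvert hx (hpos m) (hpos n')
    have habs : |(1/(m+1) : ℝ) - 1/(n'+1)| ≤ 1/(N+1) := by
      have hm1 : (1/(m+1) : ℝ) ≤ 1/(N+1) := by
        apply one_div_le_one_div_of_le (by positivity)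
        exact_mod_cast Nat.succ_le_succ hm
      have hn1 : (1/(n'+1) : ℝ) ≤ 1/(N+1) := by
        apply one_div_le_one_div_of_le (by positivity)
        exact_mod_cast Nat.succ_le_succ hn'
      rw [abs_sub_le_iff]
      constructor <;> [skip; skip] <;>
        · have := hpos m; have := hpos n'; linarith
    have hrpow : |(1/(m+1) : ℝ) - 1/(n'+1)| ^ α ≤ (1/(N+1) : ℝ) ^ α :=
      Real.rpow_le_rpow (abs_nonneg _) habs hα.1.le
    calc dist (F m x) (F n' x) = |U (x + (1/(m+1):ℝ) • eN n) - U (x + (1/(n'+1):ℝ) • eN n)| :=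
          Real.dist_eq _ _
      _ ≤ C * |(1/(m+1) : ℝ) - 1/(n'+1)| ^ α := hkey
      _ ≤ C * (1/(N+1) : ℝ) ^ α := mul_le_mul_of_nonneg_left hrpow hC
      _ < ε := hN N le_rfl
  -- define V as pointwise limit
  set V : Euc (n+1) → ℝ := fun x => limUnder atTop (fun m => F m x) with hV
  have hVt : ∀ x ∈ S, Tendsto (fun m => F m x) atTop (𝓝 (V x)) := fun x hx =>
    (hUC.cauchySeq hx).tendsto_limUnder
  have hTU : TendstoUniformlyOn F V atTop S := hUC.tendstoUniformlyOn_of_tendsto hVt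
  refine ⟨V, hTU.continuousOn (Eventually.of_forall hFcont).frequently, fun x hx => ?_⟩
  -- on the open epigraph, F m x → U x
  have hUt : Tendsto (fun m => F m x) atTop (𝓝 (U x)) := by
    rw [tendsto_iff_dist_tendsto_zero]
    apply squeeze_zero (fun m => dist_nonneg) (fun m => ?_) hbound
    have := hvert x hx (x (Fin.last n) + 1/(m+1)) (lt_trans hx (by have := hpos m; linarith))
    rw [vmove_eq_add_smul] at this
    have h2 : |x (Fin.last n) - (x (Fin.last n) + 1/(m+1))| = 1/(m+1) := by
      rw [abs_sub_comm, add_sub_cancel_left, abs_of_pos (hpos m)]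
    rw [h2] at this
    rw [Real.dist_eq, abs_sub_comm]
    exact this
  exact tendsto_nhds_unique (hVt x (hsub hx)) hUt
end
end

section
/- Let Ψ : ℝ^{N-1} → ℝ be L-Lipschitz. Then the strict epigraph E_Ψ is a Lip_α-extension domain for each α ∈ (0,1): there exists a constant C_D (depending on L and α) such that any two points x, y ∈ E_Ψ can be joined by a rectifiable curve γ ⊂ E_Ψ with ∫_γ dist(z, ∂E_Ψ)^{α−1}|dz| ≤ C_D|x − y|^α. -/
open Metric Set MeasureTheory Filter

noncomputable section

section Aux

variable {n : ℕ} {L : ℝ} {Ψ : Euc n → ℝ}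

lemma proj_sub (x y : Euc (n+1)) : proj (x - y) = proj x - proj y := by ext i; simp [proj]
lemma proj_add' (x y : Euc (n+1)) : proj (x + y) = proj x + proj y := by ext i; simp [proj]
lemma proj_smul' (c : ℝ) (x : Euc (n+1)) : proj (c • x) = c • proj x := by ext i; simp [proj]
lemma proj_eN : proj (eN n) = 0 := by
  ext i
  simp [proj, eN, EuclideanSpace.single_apply, (Fin.castSucc_lt_last i).ne]
lemma eN_last : eN n (Fin.last n) = 1 := by simp [eN, EuclideanSpace.single_apply]
lemma norm_eN : ‖eN n‖ = 1 := by simp [eN, EuclideanSpace.norm_single]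

lemma norm_sq_decomp (v : Euc (n+1)) :
    ‖v‖^2 = ‖proj v‖^2 + (v (Fin.last n))^2 := by
  rw [EuclideanSpace.norm_eq, EuclideanSpace.norm_eq, Real.sq_sqrt (by positivity),
    Real.sq_sqrt (by positivity)]
  rw [Fin.sum_univ_castSucc]
  simp [proj, sq_abs]
lemma norm_proj_le (v : Euc (n+1)) : ‖proj v‖ ≤ ‖v‖ := by
  have h := norm_sq_decomp v
  nlinarith [norm_nonneg (proj v), norm_nonneg v, sq_nonneg (v (Fin.last n))]
lemma abs_last_le (v : Euc (n+1)) : |v (Fin.last n)| ≤ ‖v‖ := by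
  have h := norm_sq_decomp v
  have := abs_nonneg (v (Fin.last n))
  nlinarith [norm_nonneg (proj v), norm_nonneg v, sq_abs (v (Fin.last n))]

lemma last_aux (x v : Euc (n+1)) (a b : ℝ) :
    (x + a • v + b • eN n) (Fin.last n)
      = x (Fin.last n) + a * v (Fin.last n) + b := by
  have h1 : (x + a • v + b • eN n) (Fin.last n)
      = x (Fin.last n) + a * v (Fin.last n) + b * eN n (Fin.last n) := rfl
  rw [h1, eN_last, mul_one]

lemma proj_aux (x v : Euc (n+1)) (a b : ℝ) :
    proj (x + a • v + b • eN n) = proj x + a • proj v := by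
  rw [proj_add', proj_add', proj_smul', proj_smul', proj_eN, smul_zero, add_zero]

lemma lip_proj : LipschitzWith 1 (proj (n := n)) := by
  apply LipschitzWith.of_dist_le_mul
  intro x y
  rw [NNReal.coe_one, one_mul, dist_eq_norm, dist_eq_norm, ← proj_sub]
  exact norm_proj_le _

lemma cont_last : Continuous (fun x : Euc (n+1) => x (Fin.last n)) := by
  have h : LipschitzWith 1 (fun x : Euc (n+1) => x (Fin.last n)) := by
    apply LipschitzWith.of_dist_le_mul
    intro x y
    calc dist (x (Fin.last n)) (y (Fin.last n)) = |(x - y) (Fin.last n)| := by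
          rw [Real.dist_eq]; norm_num
      _ ≤ ‖x - y‖ := abs_last_le _
      _ = 1 * dist x y := by rw [dist_eq_norm]; ring
  exact h.continuous

lemma isOpen_epigraph (hL : 0 ≤ L) (hΨ : ∀ x y, |Ψ x - Ψ y| ≤ L * ‖x - y‖) :
    IsOpen (epigraph Ψ) := by
  have hc : Continuous Ψ := by
    refine (LipschitzWith.of_dist_le_mul (K := ⟨L, hL⟩) ?_).continuous
    intro x y
    rw [Real.dist_eq, dist_eq_norm]
    exact hΨ x y
  exact isOpen_lt (hc.comp lip_proj.continuous) cont_last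

lemma frontier_le (hL : 0 ≤ L) (hΨ : ∀ x y, |Ψ x - Ψ y| ≤ L * ‖x - y‖) {w : Euc (n+1)}
    (hw : w ∈ frontier (epigraph Ψ)) : w (Fin.last n) ≤ Ψ (proj w) := by
  rw [(isOpen_epigraph hL hΨ).frontier_eq] at hw
  exact not_lt.1 hw.2

lemma dist_frontier_ge (hL : 0 ≤ L) (hΨ : ∀ x y, |Ψ x - Ψ y| ≤ L * ‖x - y‖)
    {z w : Euc (n+1)} (hw : w ∈ frontier (epigraph Ψ)) :
    z (Fin.last n) - Ψ (proj z) ≤ (1 + L) * dist z w := by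
  have h1 : w (Fin.last n) ≤ Ψ (proj w) := frontier_le hL hΨ hw
  have h2 : Ψ (proj w) - Ψ (proj z) ≤ L * ‖proj w - proj z‖ :=
    (le_abs_self _).trans (hΨ _ _)
  have h3 : ‖proj w - proj z‖ ≤ ‖z - w‖ := by
    rw [show proj w - proj z = -(proj (z - w)) by rw [proj_sub]; abel, norm_neg]
    exact norm_proj_le (z - w)
  have h4 : z (Fin.last n) - w (Fin.last n) ≤ ‖z - w‖ := by
    have := (abs_le.1 (abs_last_le (z - w))).2
    simpa using this
  rw [dist_eq_norm]
  have h5 : L * ‖proj w - proj z‖ ≤ L * ‖z - w‖ := by nlinarith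
  nlinarith

lemma infDist_rpow_le (hL : 0 ≤ L) (hΨ : ∀ x y, |Ψ x - Ψ y| ≤ L * ‖x - y‖)
    {z : Euc (n+1)} {b β : ℝ} (hβ : β < 0) (hb : 0 < b)
    (hble : (1 + L) * b ≤ z (Fin.last n) - Ψ (proj z)) :
    infDist z (frontier (epigraph Ψ)) ^ (β : ℝ) ≤ b ^ (β : ℝ) := by
  rcases eq_empty_or_nonempty (frontier (epigraph Ψ)) with he | hne
  · rw [he, infDist_empty, Real.zero_rpow hβ.ne]
    positivity
  · have h : b ≤ infDist z (frontier (epigraph Ψ)) := by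
      by_contra hcon
      push_neg at hcon
      rw [infDist_lt_iff hne] at hcon
      obtain ⟨w, hw, hd⟩ := hcon
      have h1 := dist_frontier_ge hL hΨ (z := z) hw
      nlinarith [dist_nonneg (x := z) (y := w)]
    exact Real.rpow_le_rpow_of_nonpos hb h hβ.le

lemma abs_min_sub_min_right (u w c : ℝ) : |min u c - min w c| ≤ |u - w| := by
  refine (abs_min_sub_min_le_max u c w c).trans ?_
  simp [abs_nonneg]

lemma abs_max_sub_max_right (u w c : ℝ) : |max u c - max w c| ≤ |u - w| := by
  refine (abs_max_sub_max_le_max u c w c).trans ?_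
  simp [abs_nonneg]

end Aux

set_option maxHeartbeats 1000000 in
/-- The strict epigraph of a Lipschitz function is a `Lip_α`-extension domain. -/
theorem stmt11 {n : ℕ} (L α : ℝ) (hL : 0 ≤ L) (hα : α ∈ Ioo (0:ℝ) 1)
    (Ψ : Euc n → ℝ) (hΨ : ∀ x y, |Ψ x - Ψ y| ≤ L * ‖x - y‖) :
    ∃ CD : ℝ, ∀ x ∈ epigraph Ψ, ∀ y ∈ epigraph Ψ, ∃ γ : ℝ → Euc (n+1),
      γ 0 = x ∧ γ 1 = y ∧ (∀ t ∈ Icc (0:ℝ) 1, γ t ∈ epigraph Ψ) ∧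
      (∃ K : NNReal, LipschitzWith K γ) ∧
      ∫ t in (0:ℝ)..1, infDist (γ t) (frontier (epigraph Ψ)) ^ (α - 1) * ‖deriv γ t‖ ≤
        CD * ‖x - y‖ ^ α := by
  obtain ⟨hα0, hα1⟩ := hα
  have hβ : α - 1 < 0 := by linarith
  refine ⟨3*(2+L)*(2/α + 2), ?_⟩
  intro x hx y hy
  by_cases hxy : x = y
  · refine ⟨fun _ => x, rfl, by rw [hxy], fun t _ => hx, ⟨0, LipschitzWith.const' x⟩, ?_⟩
    subst hxy
    simp [Real.zero_rpow hα0.ne']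
  -- main case
  set d : ℝ := ‖x - y‖ with hd_def
  have hd0 : 0 < d := by
    rw [hd_def, norm_pos_iff]
    exact sub_ne_zero.mpr hxy
  set H : ℝ := (1+L)*d with hH_def
  have hLd : (0:ℝ) < (1+L)*d := mul_pos (by linarith) hd0
  have hH0 : 0 < H := by rw [hH_def]; exact hLd
  set v : Euc (n+1) := y - x with hv_def
  have hnv : ‖v‖ = d := by rw [hv_def, hd_def, norm_sub_rev]
  have hvlast : |v (Fin.last n)| ≤ d := hnv ▸ abs_last_le v
  have hvproj : ‖proj v‖ ≤ d := hnv ▸ norm_proj_le v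
  have hpv : proj v = proj y - proj x := by rw [hv_def, proj_sub]
  have hvl : v (Fin.last n) = y (Fin.last n) - x (Fin.last n) := rfl
  set g : ℝ → ℝ := fun t => min (max (3*t - 1) 0) 1 with hg_def
  set f : ℝ → ℝ := fun t => min (min (3*t) 1) (3 - 3*t) with hf_def
  set γ : ℝ → Euc (n+1) := fun t => x + g t • v + (H * f t) • eN n with hγ_def
  have hx' : Ψ (proj x) < x (Fin.last n) := hx
  have hy' : Ψ (proj y) < y (Fin.last n) := hy
  -- endpoint values
  have hγ0 : γ 0 = x := by
    have hg0 : g 0 = 0 := by norm_num [hg_def]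
    have hf0 : f 0 = 0 := by norm_num [hf_def]
    simp [hγ_def, hg0, hf0]
  have hγ1 : γ 1 = y := by
    have hg1 : g 1 = 1 := by norm_num [hg_def]
    have hf1 : f 1 = 0 := by norm_num [hf_def]
    simp [hγ_def, hg1, hf1, hv_def]
  -- key height estimate
  have key : ∀ t, 0 ≤ t → t ≤ 1 →
      (1+L)*d * min (min (3*t) (3-3*t)) (1/2) <
        γ t (Fin.last n) - Ψ (proj (γ t)) := by
    intro t ht0 ht1
    have hlast : γ t (Fin.last n)
        = x (Fin.last n) + g t * v (Fin.last n) + H * f t := last_aux x v (g t) (H * f t)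
    have hproj : proj (γ t) = proj x + g t • proj v := proj_aux x v (g t) (H * f t)
    have hm1 : min (min (3*t) (3-3*t)) (1/2) ≤ 3*t :=
      le_trans (min_le_left _ _) (min_le_left _ _)
    have hm2 : min (min (3*t) (3-3*t)) (1/2) ≤ 3-3*t :=
      le_trans (min_le_left _ _) (min_le_right _ _)
    have hm3 : min (min (3*t) (3-3*t)) (1/2) ≤ 1/2 := min_le_right _ _
    have hHm : H = (1+L)*d := hH_def
    rcases le_or_gt t (1/3) with h13 | h13
    · -- first vertical segment
      have hg : g t = 0 := by
        show min (max (3*t-1) 0) 1 = 0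
        rw [show max (3*t-1) 0 = 0 from max_eq_right (by linarith)]
        exact min_eq_left (by norm_num)
      have hf : f t = 3*t := by
        show min (min (3*t) 1) (3-3*t) = 3*t
        rw [show min (3*t) 1 = 3*t from min_eq_left (by linarith)]
        exact min_eq_left (by linarith)
      rw [hlast, hproj, hg, hf]
      simp only [zero_mul, zero_smul, add_zero]
      have hHt : H * (3*t) = (1+L)*d*(3*t) := by rw [hH_def]
      have p3a := mul_le_mul_of_nonneg_left hm1 hLd.le
      linarith
    rcases le_or_gt t (2/3) with h23 | h23
    · -- middle segment
      have hs0 : (0:ℝ) ≤ 3*t-1 := by linarith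
      have hs1 : (3:ℝ)*t-1 ≤ 1 := by linarith
      have hg : g t = 3*t-1 := by
        show min (max (3*t-1) 0) 1 = 3*t-1
        rw [show max (3*t-1) 0 = 3*t-1 from max_eq_left hs0]
        exact min_eq_left hs1
      have hf : f t = 1 := by
        show min (min (3*t) 1) (3-3*t) = 1
        rw [show min (3*t) 1 = 1 from min_eq_right (by linarith)]
        exact min_eq_left (by linarith)
      rw [hlast, hproj, hg, hf, mul_one]
      have habs := abs_le.1 hvlast
      rcases le_total (3*t-1) (1/2) with hhalf | hhalf
      · -- use the bound from x
        have hb1 : Ψ (proj x + (3*t-1) • proj v) - Ψ (proj x) ≤ L * ((3*t-1) * d) := by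
          have h := (le_abs_self _).trans (hΨ (proj x + (3*t-1) • proj v) (proj x))
          rw [add_sub_cancel_left, norm_smul, Real.norm_eq_abs, abs_of_nonneg hs0] at h
          have h2 : (3*t-1) * ‖proj v‖ ≤ (3*t-1) * d := mul_le_mul_of_nonneg_left hvproj hs0
          have h3 := mul_le_mul_of_nonneg_left h2 hL
          linarith
        have p1 : (3*t-1) * (-d) ≤ (3*t-1) * v (Fin.last n) :=
          mul_le_mul_of_nonneg_left habs.1 hs0
        have p3 := mul_le_mul_of_nonneg_left hm3 hLd.le
        have p4 : (1+L)*d*(1/2) ≤ (1+L)*d*(2-3*t) :=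
          mul_le_mul_of_nonneg_left (by linarith) hLd.le
        linarith
      · -- use the bound from y
        have hb2 : Ψ (proj x + (3*t-1) • proj v) - Ψ (proj y) ≤ L * ((2-3*t) * d) := by
          have h := (le_abs_self _).trans (hΨ (proj x + (3*t-1) • proj v) (proj y))
          have heq : proj x + (3*t-1) • proj v - proj y = (3*t-2) • proj v := by
            rw [hpv]
            module
          rw [heq, norm_smul, Real.norm_eq_abs, abs_of_nonpos (by linarith : 3*t-2 ≤ 0),
            show -(3*t-2) = 2-3*t by ring] at h
          have h2 : (2-3*t) * ‖proj v‖ ≤ (2-3*t) * d :=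
            mul_le_mul_of_nonneg_left hvproj (by linarith)
          have h3 := mul_le_mul_of_nonneg_left h2 hL
          linarith
        have p1 : (2-3*t) * v (Fin.last n) ≤ (2-3*t) * d :=
          mul_le_mul_of_nonneg_left habs.2 (by linarith)
        have p3 := mul_le_mul_of_nonneg_left hm3 hLd.le
        have p4 : (1+L)*d*(1/2) ≤ (1+L)*d*(3*t-1) :=
          mul_le_mul_of_nonneg_left (by linarith) hLd.le
        linarith
    · -- last vertical segment
      have hg : g t = 1 := by
        show min (max (3*t-1) 0) 1 = 1
        rw [show max (3*t-1) 0 = 3*t-1 from max_eq_left (by linarith)]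
        exact min_eq_right (by linarith)
      have hf : f t = 3-3*t := by
        show min (min (3*t) 1) (3-3*t) = 3-3*t
        rw [show min (3*t) 1 = 1 from min_eq_right (by linarith)]
        exact min_eq_right (by linarith)
      rw [hlast, hproj, hg, hf, one_mul, one_smul]
      have hpe : proj x + proj v = proj y := by rw [hpv]; abel
      rw [hpe]
      have hHt : H * (3-3*t) = (1+L)*d*(3-3*t) := by rw [hH_def]
      have p3a := mul_le_mul_of_nonneg_left hm2 hLd.le
      linarith
  -- membership
  have hmem : ∀ t ∈ Icc (0:ℝ) 1, γ t ∈ epigraph Ψ := by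
    intro t ht
    have hk := key t ht.1 ht.2
    have hm0 : (0:ℝ) ≤ min (min (3*t) (3-3*t)) (1/2) :=
      le_min (le_min (by linarith [ht.1]) (by linarith [ht.2])) (by norm_num)
    have h0 : (0:ℝ) ≤ (1+L)*d * min (min (3*t) (3-3*t)) (1/2) :=
      mul_nonneg hLd.le hm0
    show Ψ (proj (γ t)) < γ t (Fin.last n)
    linarith
  -- Lipschitz
  set K : ℝ := 3*(2+L)*d with hK_def
  have hK0 : 0 < K := by
    rw [hK_def]
    exact mul_pos (by linarith) hd0
  have hlipg : ∀ a b : ℝ, |g a - g b| ≤ 3 * |a - b| := by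
    intro a b
    show |min (max (3*a-1) 0) 1 - min (max (3*b-1) 0) 1| ≤ 3 * |a-b|
    calc |min (max (3*a-1) 0) 1 - min (max (3*b-1) 0) 1|
        ≤ |max (3*a-1) 0 - max (3*b-1) 0| := abs_min_sub_min_right _ _ _
      _ ≤ |(3*a-1) - (3*b-1)| := abs_max_sub_max_right _ _ _
      _ = 3 * |a - b| := by rw [show (3*a-1) - (3*b-1) = 3*(a-b) by ring, abs_mul]; norm_num
  have hlipf : ∀ a b : ℝ, |f a - f b| ≤ 3 * |a - b| := by
    intro a b
    show |min (min (3*a) 1) (3-3*a) - min (min (3*b) 1) (3-3*b)| ≤ 3 * |a-b|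
    refine (abs_min_sub_min_le_max _ _ _ _).trans (max_le ?_ ?_)
    · calc |min (3*a) 1 - min (3*b) 1| ≤ |3*a - 3*b| := abs_min_sub_min_right _ _ _
        _ = 3 * |a - b| := by rw [show 3*a - 3*b = 3*(a-b) by ring, abs_mul]; norm_num
    · rw [show (3 - 3*a) - (3 - 3*b) = 3*(b-a) by ring, abs_mul, abs_sub_comm b a]
      norm_num
  have hlip : LipschitzWith K.toNNReal γ := by
    apply LipschitzWith.of_dist_le_mul
    intro a b
    rw [Real.coe_toNNReal _ hK0.le, dist_eq_norm, dist_eq_norm]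
    have hsub : γ a - γ b = (g a - g b) • v + (H * f a - H * f b) • eN n := by
      show (x + g a • v + (H * f a) • eN n) - (x + g b • v + (H * f b) • eN n)
        = (g a - g b) • v + (H * f a - H * f b) • eN n
      module
    rw [hsub]
    calc ‖(g a - g b) • v + (H * f a - H * f b) • eN n‖
        ≤ ‖(g a - g b) • v‖ + ‖(H * f a - H * f b) • eN n‖ := norm_add_le _ _
      _ = |g a - g b| * d + |H * f a - H * f b| * 1 := by
          rw [norm_smul, norm_smul, hnv, norm_eN, Real.norm_eq_abs, Real.norm_eq_abs]
      _ ≤ (3 * |a - b|) * d + (H * (3 * |a - b|)) * 1 := by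
          have h1 := hlipg a b
          have h2 : |H * f a - H * f b| = H * |f a - f b| := by
            rw [show H * f a - H * f b = H * (f a - f b) by ring, abs_mul, abs_of_nonneg hH0.le]
          rw [h2]
          have h3 := mul_le_mul_of_nonneg_left (hlipf a b) hH0.le
          have h4 := mul_le_mul_of_nonneg_right h1 hd0.le
          linarith
      _ = K * ‖a - b‖ := by
          rw [Real.norm_eq_abs, hK_def, hH_def]
          ring
  -- derivative bound
  have hderiv : ∀ t : ℝ, ‖deriv γ t‖ ≤ K := by
    intro t
    have h := norm_deriv_le_of_lipschitz (𝕜 := ℝ) hlip (x₀ := t)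
    rwa [Real.coe_toNNReal _ hK0.le] at h
  refine ⟨γ, hγ0, hγ1, hmem, ⟨K.toNNReal, hlip⟩, ?_⟩
  -- the integral estimate
  set I1 : ℝ := K * (3*d)^(α-1) with hI1_def
  set I2 : ℝ := K * (d/2)^(α-1) with hI2_def
  set D : ℝ → ℝ := fun t => I1 * t^(α-1) + I1 * (1-t)^(α-1) + I2 with hD_def
  have hint1 : IntervalIntegrable (fun t : ℝ => t^(α-1)) volume 0 1 :=
    intervalIntegral.intervalIntegrable_rpow' (by linarith)
  have hint2 : IntervalIntegrable (fun t : ℝ => (1-t)^(α-1)) volume 0 1 := by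
    have h := (hint1.comp_sub_left 1).symm
    simpa using h
  have hintD : IntervalIntegrable D volume 0 1 := by
    rw [hD_def]
    exact ((hint1.const_mul I1).add (hint2.const_mul I1)).add
      (intervalIntegrable_const (c := I2))
  -- pointwise bound
  have hpt : ∀ t ∈ Ioo (0:ℝ) 1,
      infDist (γ t) (frontier (epigraph Ψ)) ^ (α-1) * ‖deriv γ t‖ ≤ D t := by
    intro t ht
    set m : ℝ := min (min (3*t) (3-3*t)) (1/2) with hm_def
    have hm0 : 0 < m :=
      lt_min (lt_min (by linarith [ht.1]) (by linarith [ht.2])) one_half_pos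
    have hk := key t ht.1.le ht.2.le
    have hdm : 0 < d * m := mul_pos hd0 hm0
    have h1 : infDist (γ t) (frontier (epigraph Ψ)) ^ (α-1) ≤ (d*m)^(α-1) := by
      apply infDist_rpow_le hL hΨ hβ hdm
      calc (1+L) * (d*m) = (1+L)*d*m := by ring
        _ ≤ γ t (Fin.last n) - Ψ (proj (γ t)) := hk.le
    have ht1' : (0:ℝ) ≤ 1 - t := by linarith [ht.2]
    have e1 : (0:ℝ) ≤ (3*d)^(α-1) * t^(α-1) :=
      mul_nonneg (Real.rpow_nonneg (by linarith) _) (Real.rpow_nonneg ht.1.le _)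
    have e2 : (0:ℝ) ≤ (3*d)^(α-1) * (1-t)^(α-1) :=
      mul_nonneg (Real.rpow_nonneg (by linarith) _) (Real.rpow_nonneg ht1' _)
    have e3 : (0:ℝ) ≤ (d/2)^(α-1) := Real.rpow_nonneg (by linarith) _
    have h2 : (d*m)^(α-1)
        ≤ (3*d)^(α-1) * t^(α-1) + (3*d)^(α-1) * (1-t)^(α-1) + (d/2)^(α-1) := by
      rcases min_cases (min (3*t) (3-3*t)) (1/2) with ⟨he, _⟩ | ⟨he, _⟩
      · rcases min_cases (3*t) (3-3*t) with ⟨he2, _⟩ | ⟨he2, _⟩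
        · have hm : d * m = (3*d) * t := by rw [hm_def, he, he2]; ring
          rw [hm, Real.mul_rpow (by linarith) ht.1.le]
          linarith
        · have hm : d * m = (3*d) * (1-t) := by rw [hm_def, he, he2]; ring
          rw [hm, Real.mul_rpow (by linarith) ht1']
          linarith
      · have hm : d * m = d/2 := by rw [hm_def, he]; ring
        rw [hm]
        linarith
    calc infDist (γ t) (frontier (epigraph Ψ)) ^ (α-1) * ‖deriv γ t‖
        ≤ (d*m)^(α-1) * K :=
          mul_le_mul h1 (hderiv t) (norm_nonneg _) (Real.rpow_nonneg hdm.le _)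
      _ ≤ ((3*d)^(α-1) * t^(α-1) + (3*d)^(α-1) * (1-t)^(α-1) + (d/2)^(α-1)) * K :=
          mul_le_mul_of_nonneg_right h2 hK0.le
      _ = D t := by rw [hD_def, hI1_def, hI2_def]; ring
  have hae : ∀ᵐ t ∂(volume.restrict (Icc (0:ℝ) 1)),
      infDist (γ t) (frontier (epigraph Ψ)) ^ (α-1) * ‖deriv γ t‖ ≤ D t := by
    rw [← Measure.restrict_congr_set Ioo_ae_eq_Icc]
    exact (ae_restrict_mem measurableSet_Ioo).mono hpt
  -- the integral of D
  have hR1 : ∫ t in (0:ℝ)..1, t^(α-1) = 1/α := by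
    rw [integral_rpow (Or.inl (by linarith))]
    rw [show α - 1 + 1 = α by ring, Real.one_rpow, Real.zero_rpow hα0.ne']
    ring
  have hR2 : ∫ t in (0:ℝ)..1, (1-t)^(α-1) = 1/α := by
    have h := intervalIntegral.integral_comp_sub_left (a := (0:ℝ)) (b := 1)
      (fun u : ℝ => u^(α-1)) 1
    simp only [sub_zero, sub_self] at h
    rw [h, hR1]
  have hDval : ∫ t in (0:ℝ)..1, D t = I1 * (1/α) + I1 * (1/α) + I2 := by
    rw [hD_def]
    rw [intervalIntegral.integral_add ((hint1.const_mul I1).add (hint2.const_mul I1))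
      (intervalIntegrable_const (c := I2))]
    rw [intervalIntegral.integral_add (hint1.const_mul I1) (hint2.const_mul I1)]
    rw [intervalIntegral.integral_const_mul, intervalIntegral.integral_const_mul,
      intervalIntegral.integral_const, hR1, hR2]
    norm_num
  -- final arithmetic
  have harith : I1 * (1/α) + I1 * (1/α) + I2 ≤ 3*(2+L)*(2/α + 2) * d^α := by
    have f1 : (3*d)^(α-1) = 3^(α-1) * d^(α-1) := Real.mul_rpow (by norm_num) hd0.le
    have f2 : (3:ℝ)^(α-1) ≤ 1 := Real.rpow_le_one_of_one_le_of_nonpos (by norm_num) hβ.le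
    have f3 : (d/2)^(α-1) = d^(α-1) * 2^(1-α) := by
      rw [div_eq_mul_inv, Real.mul_rpow hd0.le (by norm_num),
        Real.inv_rpow (by norm_num : (0:ℝ) ≤ 2), ← Real.rpow_neg (by norm_num : (0:ℝ) ≤ 2),
        show -(α-1) = 1-α by ring]
    have f4 : (2:ℝ)^(1-α) ≤ 2 := by
      calc (2:ℝ)^(1-α) ≤ 2^(1:ℝ) :=
            Real.rpow_le_rpow_of_exponent_le one_le_two (by linarith)
        _ = 2 := Real.rpow_one 2
    have f5 : d^(α-1) * d = d^α := by
      rw [← Real.rpow_add_one hd0.ne' (α-1), show α-1+1 = α by ring]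
    have f6 : 0 < d^(α-1) := Real.rpow_pos_of_pos hd0 _
    have hαinv : (0:ℝ) < 1/α := by positivity
    have hc0 : (0:ℝ) ≤ 3*(2+L)*d := mul_nonneg (by linarith) hd0.le
    rw [hI1_def, hI2_def, hK_def, f1, f3]
    have t1 : 3*(2+L)*d * (3^(α-1) * d^(α-1)) * (1/α)
        ≤ 3*(2+L)*d * d^(α-1) * (1/α) := by
      apply mul_le_mul_of_nonneg_right _ hαinv.le
      have hin : (3:ℝ)^(α-1) * d^(α-1) ≤ 1 * d^(α-1) :=
        mul_le_mul_of_nonneg_right f2 f6.le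
      calc 3*(2+L)*d * (3^(α-1) * d^(α-1)) ≤ 3*(2+L)*d * (1 * d^(α-1)) :=
            mul_le_mul_of_nonneg_left hin hc0
        _ = 3*(2+L)*d * d^(α-1) := by ring
    have t2 : 3*(2+L)*d * (d^(α-1) * 2^(1-α)) ≤ 3*(2+L)*d * (d^(α-1) * 2) :=
      mul_le_mul_of_nonneg_left (mul_le_mul_of_nonneg_left f4 f6.le) hc0
    have final : 3*(2+L)*d * d^(α-1) * (1/α) + 3*(2+L)*d * d^(α-1) * (1/α)
        + 3*(2+L)*d * (d^(α-1) * 2) = 3*(2+L)*(2/α + 2) * d^α := by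
      rw [← f5]
      ring
    linarith
  by_cases hI : IntervalIntegrable
      (fun t => infDist (γ t) (frontier (epigraph Ψ)) ^ (α-1) * ‖deriv γ t‖) volume 0 1
  · calc ∫ t in (0:ℝ)..1, infDist (γ t) (frontier (epigraph Ψ)) ^ (α-1) * ‖deriv γ t‖
        ≤ ∫ t in (0:ℝ)..1, D t :=
          intervalIntegral.integral_mono_ae_restrict zero_le_one hI hintD hae
      _ = I1 * (1/α) + I1 * (1/α) + I2 := hDval
      _ ≤ 3*(2+L)*(2/α + 2) * d^α := harith
  · rw [intervalIntegral.integral_undef hI]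
    have h1 : (0:ℝ) ≤ d^α := Real.rpow_nonneg hd0.le _
    have h2 : (0:ℝ) < 2/α := div_pos two_pos hα0
    exact mul_nonneg (mul_nonneg (by linarith) (by linarith)) h1
end
end
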